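/- If p < min(q, r), then for every integer m ≥ 0 the coefficients of Q_{p,q,r} satisfy |a_m| ≤ 2⌈m/(qr)⌉ + 1. -/

import Mathlib

open Polynomial
open scoped Classical

/-- The defining identity of the ternary inclusion-exclusion polynomial `Q_{p,q,r}`:
`Q·(z^{qr}-1)(z^{rp}-1)(z^{pq}-1)(z-1) = (z^{pqr}-1)(z^r-1)(z^q-1)(z^p-1)`. -/
def ternaryId (p q r : ℕ) (Q : Polynomial ℤ) : Prop :=
  Q * (((X : Polynomial ℤ) ^ (q * r) - 1) * ((X : Polynomial ℤ) ^ (r * p) - 1) *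
      ((X : Polynomial ℤ) ^ (p * q) - 1) * ((X : Polynomial ℤ) - 1)) =
    ((X : Polynomial ℤ) ^ (p * q * r) - 1) * ((X : Polynomial ℤ) ^ r - 1) *
      ((X : Polynomial ℤ) ^ q - 1) * ((X : Polynomial ℤ) ^ p - 1)

/-- The coefficient `a_m` of `z^m` in `Q`, indexed by `m : ℤ`, with the convention
that `a_m = 0` for `m < 0` (and automatically `a_m = 0` for `m` beyond the degree). -/
def aCoeff (Q : Polynomial ℤ) (m : ℤ) : ℤ :=
  if 0 ≤ m then Q.coeff m.toNat else 0

/-- The characteristic function `χ` of integers representable as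
`i·qr + j·rp + k·pq` with integers `i, j, k ≥ 0`. -/
noncomputable def chi (p q r : ℕ) (n : ℤ) : ℤ :=
  if ∃ i j k : ℕ, n = (i * (q * r) + j * (r * p) + k * (p * q) : ℕ) then 1 else 0

def Rrep (p q r : ℕ) (n : ℤ) : Prop :=
  ∃ i j k : ℕ, n = (i * (q * r) + j * (r * p) + k * (p * q) : ℕ)

lemma chi_eq (p q r : ℕ) (n : ℤ) : chi p q r n = if Rrep p q r n then 1 else 0 := rfl

lemma rrep_iff (p q r : ℕ) (n : ℤ) :
    Rrep p q r n ↔ ∃ i j k : ℕ, n = (i:ℤ)*((q:ℤ)*r) + (j:ℤ)*((r:ℤ)*p) + (k:ℤ)*((p:ℤ)*q) := by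
  constructor <;> rintro ⟨i, j, k, h⟩ <;> refine ⟨i, j, k, ?_⟩
  · push_cast at h; linarith
  · push_cast; linarith

lemma rrep_nonneg {p q r : ℕ} {n : ℤ} (h : Rrep p q r n) : 0 ≤ n := by
  obtain ⟨i, j, k, rfl⟩ := h; positivity

lemma chi_neg {p q r : ℕ} {n : ℤ} (h : n < 0) : chi p q r n = 0 := by
  rw [chi_eq, if_neg]; intro hR; exact absurd (rrep_nonneg hR) (by omega)

lemma chi_nonneg (p q r : ℕ) (n : ℤ) : 0 ≤ chi p q r n := by
  rw [chi_eq]; split_ifs <;> norm_num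

/-- 4-component representation. -/
def Red (p q r : ℕ) (i j k s : ℕ) (n : ℤ) : Prop :=
  n = (i:ℤ)*((q:ℤ)*r) + (j:ℤ)*((r:ℤ)*p) + (k:ℤ)*((p:ℤ)*q) + (s:ℤ)*((p:ℤ)*q*r)

lemma rrep_of_red {p q r i j k s : ℕ} {n : ℤ} (h : Red p q r i j k s n) : Rrep p q r n := by
  unfold Red at h
  refine (rrep_iff p q r n).mpr ⟨i + s*p, j, k, ?_⟩
  push_cast
  linear_combination h

lemma red_exists {p q r : ℕ} (hp : 0 < p) (hq : 0 < q) (hr : 0 < r) {n : ℤ}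
    (h : Rrep p q r n) :
    ∃ i j k s : ℕ, i < p ∧ j < q ∧ k < r ∧ Red p q r i j k s n := by
  rw [rrep_iff] at h
  obtain ⟨i, j, k, rfl⟩ := h
  refine ⟨i % p, j % q, k % r, i/p + j/q + k/r, Nat.mod_lt _ hp, Nat.mod_lt _ hq,
    Nat.mod_lt _ hr, ?_⟩
  have hi : (i:ℤ) = p * (i/p) + (i % p) := by exact_mod_cast (Nat.div_add_mod i p).symm
  have hj : (j:ℤ) = q * (j/q) + (j % q) := by exact_mod_cast (Nat.div_add_mod j q).symm
  have hk : (k:ℤ) = r * (k/r) + (k % r) := by exact_mod_cast (Nat.div_add_mod k r).symm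
  unfold Red
  push_cast
  linear_combination ((q:ℤ)*r) * hi + ((r:ℤ)*p) * hj + ((p:ℤ)*q) * hk

/-- divisibility with small absolute value: two options. -/
lemma dvd_small {d x : ℤ} (hd : 0 < d) (hdvd : d ∣ x) (h1 : -d ≤ x) (h2 : x < d) :
    x = 0 ∨ x = -d := by
  obtain ⟨c, rfl⟩ := hdvd
  rcases lt_trichotomy c 0 with h | h | h
  · right
    have : c = -1 := by nlinarith
    rw [this]; ring
  · left; rw [h]; ring
  · exfalso; nlinarith

lemma rrep_of_combo (p q r : ℕ) {n x y z : ℤ} (hx : 0 ≤ x) (hy : 0 ≤ y) (hz : 0 ≤ z)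
    (h : n = x*((q:ℤ)*r) + y*((r:ℤ)*p) + z*((p:ℤ)*q)) : Rrep p q r n := by
  refine (rrep_iff p q r n).mpr ⟨x.toNat, y.toNat, z.toNat, ?_⟩
  rw [Int.toNat_of_nonneg hx, Int.toNat_of_nonneg hy, Int.toNat_of_nonneg hz]; exact h

lemma red_unique (p q r : ℕ) (hp : 0 < p) (hq : 0 < q) (hr : 0 < r)
    (hpq : Nat.Coprime p q) (hqr : Nat.Coprime q r) (hrp : Nat.Coprime r p)
    {n : ℤ} {i j k s i' j' k' s' : ℕ}
    (h : Red p q r i j k s n) (h' : Red p q r i' j' k' s' n)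
    (hi : i < p) (hi' : i' < p) (hj : j < q) (hj' : j' < q) (hk : k < r) (hk' : k' < r) :
    i = i' ∧ j = j' ∧ k = k' ∧ s = s' := by
  unfold Red at h h'
  have cp1 : IsCoprime (p:ℤ) ((q:ℤ)*r) := by
    have := Nat.isCoprime_iff_coprime.mpr (Nat.Coprime.mul_right hpq hrp.symm)
    push_cast at this; exact this
  have cp2 : IsCoprime (q:ℤ) ((r:ℤ)*p) := by
    have := Nat.isCoprime_iff_coprime.mpr (Nat.Coprime.mul_right hqr hpq.symm)
    push_cast at this; exact this
  have cp3 : IsCoprime (r:ℤ) ((p:ℤ)*q) := by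
    have := Nat.isCoprime_iff_coprime.mpr (Nat.Coprime.mul_right hrp hqr.symm)
    push_cast at this; exact this
  have d1 : (p:ℤ) ∣ ((i:ℤ) - i') * ((q:ℤ)*r) :=
    ⟨-(((j:ℤ)-j')*r) - (((k:ℤ)-k')*q) - (((s:ℤ)-s')*((q:ℤ)*r)), by linear_combination h' - h⟩
  have d2 : (q:ℤ) ∣ ((j:ℤ) - j') * ((r:ℤ)*p) :=
    ⟨-(((i:ℤ)-i')*r) - (((k:ℤ)-k')*p) - (((s:ℤ)-s')*((p:ℤ)*r)), by linear_combination h' - h⟩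
  have d3 : (r:ℤ) ∣ ((k:ℤ) - k') * ((p:ℤ)*q) :=
    ⟨-(((i:ℤ)-i')*q) - (((j:ℤ)-j')*p) - (((s:ℤ)-s')*((p:ℤ)*q)), by linear_combination h' - h⟩
  have e1 := dvd_small (show (0:ℤ) < p by exact_mod_cast hp) (cp1.dvd_of_dvd_mul_right d1)
    (by omega) (by omega)
  have e2 := dvd_small (show (0:ℤ) < q by exact_mod_cast hq) (cp2.dvd_of_dvd_mul_right d2)
    (by omega) (by omega)
  have e3 := dvd_small (show (0:ℤ) < r by exact_mod_cast hr) (cp3.dvd_of_dvd_mul_right d3)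
    (by omega) (by omega)
  have hii : i = i' := by omega
  have hjj : j = j' := by omega
  have hkk : k = k' := by omega
  refine ⟨hii, hjj, hkk, ?_⟩
  subst hii; subst hjj; subst hkk
  have h4 : ((s:ℤ) - s') * ((p:ℤ)*q*r) = 0 := by linear_combination h' - h
  have h5 : ((p:ℤ)*q*r) ≠ 0 := by positivity
  have := (mul_eq_zero.mp h4).resolve_right h5
  omega

lemma red_shift_back (p q r a b c e1 e2 e3 i j k s : ℕ) {n : ℤ}
    (hred : Red p q r i j k s n)
    (h1 : a ≤ i + e1 * p) (h2 : b ≤ j + e2 * q) (h3 : c ≤ k + e3 * r)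
    (hD : e1 + e2 + e3 ≤ s) :
    Rrep p q r (n - (a:ℤ)*((q:ℤ)*r) - (b:ℤ)*((r:ℤ)*p) - (c:ℤ)*((p:ℤ)*q)) := by
  unfold Red at hred
  have h1' : (a:ℤ) ≤ (i:ℤ) + (e1:ℤ)*p := by exact_mod_cast h1
  have h2' : (b:ℤ) ≤ (j:ℤ) + (e2:ℤ)*q := by exact_mod_cast h2
  have h3' : (c:ℤ) ≤ (k:ℤ) + (e3:ℤ)*r := by exact_mod_cast h3
  have hD' : (e1:ℤ) + e2 + e3 ≤ (s:ℤ) := by exact_mod_cast hD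
  have hmn : (0:ℤ) ≤ ((s:ℤ) - ((e1:ℤ)+e2+e3)) * (p:ℤ) :=
    mul_nonneg (by linarith) (by positivity)
  refine rrep_of_combo p q r (x := (i:ℤ) + (e1:ℤ)*p - a + ((s:ℤ) - ((e1:ℤ)+e2+e3))*p)
    (y := (j:ℤ) + (e2:ℤ)*q - b) (z := (k:ℤ) + (e3:ℤ)*r - c)
    (by linarith) (by linarith) (by linarith) (by linear_combination hred)

lemma shift_char (p q r : ℕ) (hp : 0 < p) (hq : 0 < q) (hr : 0 < r)
    (hpq : Nat.Coprime p q) (hqr : Nat.Coprime q r) (hrp : Nat.Coprime r p)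
    {n : ℤ} {i j k s : ℕ} (hi : i < p) (hj : j < q) (hk : k < r)
    (hred : Red p q r i j k s n) (a b c : ℕ) (ha : a ≤ 1) (hb : b ≤ 1) (hc : c ≤ 1) :
    Rrep p q r (n - (a:ℤ)*((q:ℤ)*r) - (b:ℤ)*((r:ℤ)*p) - (c:ℤ)*((p:ℤ)*q)) ↔
      ((if i < a then (1:ℤ) else 0) + (if j < b then 1 else 0) + (if k < c then 1 else 0)
        ≤ (s:ℤ)) := by
  constructor
  · intro hm
    obtain ⟨i₂, j₂, k₂, s₂, hi₂, hj₂, hk₂, hred₂⟩ := red_exists hp hq hr hm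
    unfold Red at hred hred₂
    have E : ((i:ℤ) - i₂ - a)*((q:ℤ)*r) + ((j:ℤ) - j₂ - b)*((r:ℤ)*p)
        + ((k:ℤ) - k₂ - c)*((p:ℤ)*q) + ((s:ℤ) - s₂)*((p:ℤ)*q*r) = 0 := by
      linear_combination hred₂ - hred
    have cp1 : IsCoprime (p:ℤ) ((q:ℤ)*r) := by
      have := Nat.isCoprime_iff_coprime.mpr (Nat.Coprime.mul_right hpq hrp.symm)
      push_cast at this; exact this
    have cp2 : IsCoprime (q:ℤ) ((r:ℤ)*p) := by
      have := Nat.isCoprime_iff_coprime.mpr (Nat.Coprime.mul_right hqr hpq.symm)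
      push_cast at this; exact this
    have cp3 : IsCoprime (r:ℤ) ((p:ℤ)*q) := by
      have := Nat.isCoprime_iff_coprime.mpr (Nat.Coprime.mul_right hrp hqr.symm)
      push_cast at this; exact this
    have d1 : (p:ℤ) ∣ ((i:ℤ) - i₂ - a) * ((q:ℤ)*r) :=
      ⟨-(((j:ℤ)-j₂-b)*r) - (((k:ℤ)-k₂-c)*q) - (((s:ℤ)-s₂)*((q:ℤ)*r)),
        by linear_combination E⟩
    have d2 : (q:ℤ) ∣ ((j:ℤ) - j₂ - b) * ((r:ℤ)*p) :=
      ⟨-(((i:ℤ)-i₂-a)*r) - (((k:ℤ)-k₂-c)*p) - (((s:ℤ)-s₂)*((p:ℤ)*r)),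
        by linear_combination E⟩
    have d3 : (r:ℤ) ∣ ((k:ℤ) - k₂ - c) * ((p:ℤ)*q) :=
      ⟨-(((i:ℤ)-i₂-a)*q) - (((j:ℤ)-j₂-b)*p) - (((s:ℤ)-s₂)*((p:ℤ)*q)),
        by linear_combination E⟩
    have t1 := dvd_small (show (0:ℤ) < p by exact_mod_cast hp)
      (cp1.dvd_of_dvd_mul_right d1) (by omega) (by omega)
    have t2 := dvd_small (show (0:ℤ) < q by exact_mod_cast hq)
      (cp2.dvd_of_dvd_mul_right d2) (by omega) (by omega)
    have t3 := dvd_small (show (0:ℤ) < r by exact_mod_cast hr)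
      (cp3.dvd_of_dvd_mul_right d3) (by omega) (by omega)
    obtain ⟨f1, hf1, hx1⟩ : ∃ f1 : ℤ, (f1 = 0 ∨ f1 = 1) ∧ (i₂:ℤ) + a - i = f1 * p := by
      rcases t1 with h|h
      · exact ⟨0, Or.inl rfl, by linarith⟩
      · exact ⟨1, Or.inr rfl, by linarith⟩
    obtain ⟨f2, hf2, hx2⟩ : ∃ f2 : ℤ, (f2 = 0 ∨ f2 = 1) ∧ (j₂:ℤ) + b - j = f2 * q := by
      rcases t2 with h|h
      · exact ⟨0, Or.inl rfl, by linarith⟩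
      · exact ⟨1, Or.inr rfl, by linarith⟩
    obtain ⟨f3, hf3, hx3⟩ : ∃ f3 : ℤ, (f3 = 0 ∨ f3 = 1) ∧ (k₂:ℤ) + c - k = f3 * r := by
      rcases t3 with h|h
      · exact ⟨0, Or.inl rfl, by linarith⟩
      · exact ⟨1, Or.inr rfl, by linarith⟩
    have h4 : ((s:ℤ) - s₂ - (f1 + f2 + f3)) * ((p:ℤ)*q*r) = 0 := by
      linear_combination E + ((q:ℤ)*r)*hx1 + ((r:ℤ)*p)*hx2 + ((p:ℤ)*q)*hx3
    have h5 : ((p:ℤ)*q*r) ≠ 0 := by positivity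
    have h6 : (s:ℤ) = s₂ + f1 + f2 + f3 := by
      have := (mul_eq_zero.mp h4).resolve_right h5; linarith
    have g1 : (if i < a then (1:ℤ) else 0) ≤ f1 := by
      split_ifs with h
      · rcases hf1 with rfl|rfl
        · exfalso; norm_num at hx1; omega
        · norm_num
      · rcases hf1 with rfl|rfl <;> norm_num
    have g2 : (if j < b then (1:ℤ) else 0) ≤ f2 := by
      split_ifs with h
      · rcases hf2 with rfl|rfl
        · exfalso; norm_num at hx2; omega
        · norm_num
      · rcases hf2 with rfl|rfl <;> norm_num
    have g3 : (if k < c then (1:ℤ) else 0) ≤ f3 := by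
      split_ifs with h
      · rcases hf3 with rfl|rfl
        · exfalso; norm_num at hx3; omega
        · norm_num
      · rcases hf3 with rfl|rfl <;> norm_num
    have hs2 : (0:ℤ) ≤ (s₂:ℤ) := Int.natCast_nonneg _
    linarith
  · intro hs
    apply red_shift_back p q r a b c (if i < a then 1 else 0) (if j < b then 1 else 0)
      (if k < c then 1 else 0) i j k s hred
    · split_ifs <;> omega
    · split_ifs <;> omega
    · split_ifs <;> omega
    · split_ifs at hs ⊢ <;> omega

lemma rrep_up (p q r : ℕ) {m : ℤ} (h : Rrep p q r m) (x y z : ℕ) :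
    Rrep p q r (m + (x:ℤ)*((q:ℤ)*r) + (y:ℤ)*((r:ℤ)*p) + (z:ℤ)*((p:ℤ)*q)) := by
  rw [rrep_iff] at h ⊢
  obtain ⟨i, j, k, rfl⟩ := h
  exact ⟨i + x, j + y, k + z, by push_cast; ring⟩

set_option maxHeartbeats 2000000 in
lemma star (p q r : ℕ) (hp : 0 < p) (hq : 0 < q) (hr : 0 < r)
    (hpq : Nat.Coprime p q) (hqr : Nat.Coprime q r) (hrp : Nat.Coprime r p) (n : ℤ) :
    chi p q r n - chi p q r (n - (q:ℤ)*r) - chi p q r (n - (r:ℤ)*p) - chi p q r (n - (p:ℤ)*q)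
      + chi p q r (n - (q:ℤ)*r - (r:ℤ)*p) + chi p q r (n - (q:ℤ)*r - (p:ℤ)*q)
      + chi p q r (n - (r:ℤ)*p - (p:ℤ)*q)
      - chi p q r (n - (q:ℤ)*r - (r:ℤ)*p - (p:ℤ)*q)
      = (if n = 0 then 1 else 0) - 2*(if n = (p:ℤ)*q*r then 1 else 0)
        + (if n = 2*((p:ℤ)*q*r) then 1 else 0) := by
  have r0 : Rrep p q r 0 := (rrep_iff p q r 0).mpr ⟨0, 0, 0, by norm_num⟩
  have r1 : Rrep p q r ((p:ℤ)*q*r) := (rrep_iff p q r _).mpr ⟨p, 0, 0, by push_cast; ring⟩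
  have r2 : Rrep p q r (2*((p:ℤ)*q*r)) :=
    (rrep_iff p q r _).mpr ⟨2*p, 0, 0, by push_cast; ring⟩
  by_cases hn : Rrep p q r n
  · obtain ⟨i, j, k, s, hi, hj, hk, hred⟩ := red_exists hp hq hr hn
    have key : ∀ a b c : ℕ, a ≤ 1 → b ≤ 1 → c ≤ 1 →
        chi p q r (n - (a:ℤ)*((q:ℤ)*r) - (b:ℤ)*((r:ℤ)*p) - (c:ℤ)*((p:ℤ)*q)) =
          if ((if i < a then (1:ℤ) else 0) + (if j < b then 1 else 0)
              + (if k < c then 1 else 0) ≤ (s:ℤ)) then 1 else 0 := by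
      intro a b c ha hb hc
      rw [chi_eq]
      exact if_congr (shift_char p q r hp hq hr hpq hqr hrp hi hj hk hred a b c ha hb hc)
        rfl rfl
    have t000 := key 0 0 0 (by norm_num) (by norm_num) (by norm_num)
    have t100 := key 1 0 0 (by norm_num) (by norm_num) (by norm_num)
    have t010 := key 0 1 0 (by norm_num) (by norm_num) (by norm_num)
    have t001 := key 0 0 1 (by norm_num) (by norm_num) (by norm_num)
    have t110 := key 1 1 0 (by norm_num) (by norm_num) (by norm_num)
    have t101 := key 1 0 1 (by norm_num) (by norm_num) (by norm_num)
    have t011 := key 0 1 1 (by norm_num) (by norm_num) (by norm_num)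
    have t111 := key 1 1 1 (by norm_num) (by norm_num) (by norm_num)
    rw [show n - ((0:ℕ):ℤ)*((q:ℤ)*r) - ((0:ℕ):ℤ)*((r:ℤ)*p) - ((0:ℕ):ℤ)*((p:ℤ)*q) = n
      by push_cast; ring] at t000
    rw [show n - ((1:ℕ):ℤ)*((q:ℤ)*r) - ((0:ℕ):ℤ)*((r:ℤ)*p) - ((0:ℕ):ℤ)*((p:ℤ)*q)
      = n - (q:ℤ)*r by push_cast; ring] at t100
    rw [show n - ((0:ℕ):ℤ)*((q:ℤ)*r) - ((1:ℕ):ℤ)*((r:ℤ)*p) - ((0:ℕ):ℤ)*((p:ℤ)*q)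
      = n - (r:ℤ)*p by push_cast; ring] at t010
    rw [show n - ((0:ℕ):ℤ)*((q:ℤ)*r) - ((0:ℕ):ℤ)*((r:ℤ)*p) - ((1:ℕ):ℤ)*((p:ℤ)*q)
      = n - (p:ℤ)*q by push_cast; ring] at t001
    rw [show n - ((1:ℕ):ℤ)*((q:ℤ)*r) - ((1:ℕ):ℤ)*((r:ℤ)*p) - ((0:ℕ):ℤ)*((p:ℤ)*q)
      = n - (q:ℤ)*r - (r:ℤ)*p by push_cast; ring] at t110
    rw [show n - ((1:ℕ):ℤ)*((q:ℤ)*r) - ((0:ℕ):ℤ)*((r:ℤ)*p) - ((1:ℕ):ℤ)*((p:ℤ)*q)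
      = n - (q:ℤ)*r - (p:ℤ)*q by push_cast; ring] at t101
    rw [show n - ((0:ℕ):ℤ)*((q:ℤ)*r) - ((1:ℕ):ℤ)*((r:ℤ)*p) - ((1:ℕ):ℤ)*((p:ℤ)*q)
      = n - (r:ℤ)*p - (p:ℤ)*q by push_cast; ring] at t011
    rw [show n - ((1:ℕ):ℤ)*((q:ℤ)*r) - ((1:ℕ):ℤ)*((r:ℤ)*p) - ((1:ℕ):ℤ)*((p:ℤ)*q)
      = n - (q:ℤ)*r - (r:ℤ)*p - (p:ℤ)*q by push_cast; ring] at t111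
    have hn0 : (n = 0) ↔ (i = 0 ∧ j = 0 ∧ k = 0 ∧ s = 0) := by
      constructor
      · intro h
        have h' : Red p q r 0 0 0 0 n := by unfold Red; rw [h]; push_cast; ring
        obtain ⟨e1, e2, e3, e4⟩ := red_unique p q r hp hq hr hpq hqr hrp hred h' hi hp hj hq hk hr
        exact ⟨e1, e2, e3, e4⟩
      · rintro ⟨rfl, rfl, rfl, rfl⟩
        unfold Red at hred; rw [hred]; push_cast; ring
    have hn1 : (n = (p:ℤ)*q*r) ↔ (i = 0 ∧ j = 0 ∧ k = 0 ∧ s = 1) := by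
      constructor
      · intro h
        have h' : Red p q r 0 0 0 1 n := by unfold Red; rw [h]; push_cast; ring
        obtain ⟨e1, e2, e3, e4⟩ := red_unique p q r hp hq hr hpq hqr hrp hred h' hi hp hj hq hk hr
        exact ⟨e1, e2, e3, e4⟩
      · rintro ⟨rfl, rfl, rfl, rfl⟩
        unfold Red at hred; rw [hred]; push_cast; ring
    have hn2 : (n = 2*((p:ℤ)*q*r)) ↔ (i = 0 ∧ j = 0 ∧ k = 0 ∧ s = 2) := by
      constructor
      · intro h
        have h' : Red p q r 0 0 0 2 n := by unfold Red; rw [h]; push_cast; ring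
        obtain ⟨e1, e2, e3, e4⟩ := red_unique p q r hp hq hr hpq hqr hrp hred h' hi hp hj hq hk hr
        exact ⟨e1, e2, e3, e4⟩
      · rintro ⟨rfl, rfl, rfl, rfl⟩
        unfold Red at hred; rw [hred]; push_cast; ring
    rw [t000, t100, t010, t001, t110, t101, t011, t111]
    simp only [hn0, hn1, hn2, Nat.not_lt_zero, if_false, Nat.lt_one_iff, add_zero, zero_add]
    split_ifs <;> omega
  · have ne : ∀ a b c : ℕ,
        ¬ Rrep p q r (n - (a:ℤ)*((q:ℤ)*r) - (b:ℤ)*((r:ℤ)*p) - (c:ℤ)*((p:ℤ)*q)) := by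
      intro a b c h
      apply hn
      have := rrep_up p q r h a b c
      rwa [show n - (a:ℤ)*((q:ℤ)*r) - (b:ℤ)*((r:ℤ)*p) - (c:ℤ)*((p:ℤ)*q)
          + (a:ℤ)*((q:ℤ)*r) + (b:ℤ)*((r:ℤ)*p) + (c:ℤ)*((p:ℤ)*q) = n by ring] at this
    have zgen : ∀ (m : ℤ) (a b c : ℕ),
        (m = n - (a:ℤ)*((q:ℤ)*r) - (b:ℤ)*((r:ℤ)*p) - (c:ℤ)*((p:ℤ)*q)) → chi p q r m = 0 := by
      intro m a b c hmeq
      rw [chi_eq, if_neg]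
      rw [hmeq]
      exact ne a b c
    have z1 : chi p q r (n - (q:ℤ)*r) = 0 := zgen _ 1 0 0 (by push_cast; ring)
    have z2 : chi p q r (n - (r:ℤ)*p) = 0 := zgen _ 0 1 0 (by push_cast; ring)
    have z3 : chi p q r (n - (p:ℤ)*q) = 0 := zgen _ 0 0 1 (by push_cast; ring)
    have z4 : chi p q r (n - (q:ℤ)*r - (r:ℤ)*p) = 0 := zgen _ 1 1 0 (by push_cast; ring)
    have z5 : chi p q r (n - (q:ℤ)*r - (p:ℤ)*q) = 0 := zgen _ 1 0 1 (by push_cast; ring)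
    have z6 : chi p q r (n - (r:ℤ)*p - (p:ℤ)*q) = 0 := zgen _ 0 1 1 (by push_cast; ring)
    have z7 : chi p q r (n - (q:ℤ)*r - (r:ℤ)*p - (p:ℤ)*q) = 0 := zgen _ 1 1 1 (by push_cast; ring)
    have z0 : chi p q r n = 0 := by rw [chi_eq, if_neg hn]
    rw [z0, z1, z2, z3, z4, z5, z6, z7]
    rw [if_neg (show ¬(n = 0) from fun h => hn (by rw [h]; exact r0)),
      if_neg (show ¬(n = (p:ℤ)*q*r) from fun h => hn (by rw [h]; exact r1)),
      if_neg (show ¬(n = 2*((p:ℤ)*q*r)) from fun h => hn (by rw [h]; exact r2))]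
    ring

noncomputable def Xc (p q r : ℕ) : PowerSeries ℤ := PowerSeries.mk (fun d => chi p q r d)

lemma coeff_shift_Xc (p q r : ℕ) (n k : ℕ) :
    PowerSeries.coeff n (Xc p q r * PowerSeries.X ^ k) = chi p q r ((n:ℤ) - k) := by
  rw [PowerSeries.coeff_mul_X_pow']
  split_ifs with h
  · rw [Xc, PowerSeries.coeff_mk]; congr 1; omega
  · exact (chi_neg (by omega)).symm

lemma coeff_Xc (p q r : ℕ) (n : ℕ) : PowerSeries.coeff n (Xc p q r) = chi p q r n := by
  rw [Xc, PowerSeries.coeff_mk]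

lemma coeff_shift_poly (f : Polynomial ℤ) (n k : ℕ) :
    PowerSeries.coeff n ((f : PowerSeries ℤ) * PowerSeries.X ^ k)
      = aCoeff f ((n:ℤ) - k) := by
  rw [PowerSeries.coeff_mul_X_pow']
  unfold aCoeff
  split_ifs with h h2 h2
  · rw [Polynomial.coeff_coe]; congr 1; omega
  · omega
  · omega
  · rfl

lemma coeff_poly (f : Polynomial ℤ) (n : ℕ) :
    PowerSeries.coeff n (f : PowerSeries ℤ) = aCoeff f n := by
  rw [Polynomial.coeff_coe]
  unfold aCoeff
  rw [if_pos (by positivity)]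
  simp

lemma iteNat (n k : ℕ) : (if (n:ℤ) = (k:ℤ) then (1:ℤ) else 0) = (if n = k then 1 else 0) := by
  simp [Nat.cast_inj]

set_option maxHeartbeats 1000000 in
lemma Kid (p q r : ℕ) (hp : 0 < p) (hq : 0 < q) (hr : 0 < r)
    (hpq : Nat.Coprime p q) (hqr : Nat.Coprime q r) (hrp : Nat.Coprime r p) :
    Xc p q r * ((1 - PowerSeries.X ^ (q*r)) * (1 - PowerSeries.X ^ (r*p))
        * (1 - PowerSeries.X ^ (p*q)))
      = (1 - (PowerSeries.X : PowerSeries ℤ) ^ (p*q*r))^2 := by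
  have expand : Xc p q r * ((1 - PowerSeries.X ^ (q*r)) * (1 - PowerSeries.X ^ (r*p))
        * (1 - PowerSeries.X ^ (p*q)))
      = Xc p q r - Xc p q r * PowerSeries.X^(q*r) - Xc p q r * PowerSeries.X^(r*p)
        - Xc p q r * PowerSeries.X^(p*q) + Xc p q r * PowerSeries.X^(q*r+r*p)
        + Xc p q r * PowerSeries.X^(q*r+p*q) + Xc p q r * PowerSeries.X^(r*p+p*q)
        - Xc p q r * PowerSeries.X^(q*r+(r*p+p*q)) := by
    simp only [pow_add]; ring
  have expand2 : ((1 - (PowerSeries.X : PowerSeries ℤ) ^ (p*q*r))^2 : PowerSeries ℤ)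
      = 1 - PowerSeries.X^(p*q*r) - PowerSeries.X^(p*q*r)
        + PowerSeries.X^(p*q*r + p*q*r) := by
    simp only [pow_add]; ring
  rw [expand, expand2]
  ext n
  simp only [map_sub, map_add]
  rw [coeff_Xc, coeff_shift_Xc, coeff_shift_Xc, coeff_shift_Xc, coeff_shift_Xc,
    coeff_shift_Xc, coeff_shift_Xc, coeff_shift_Xc]
  simp only [PowerSeries.coeff_one, PowerSeries.coeff_X_pow]
  have S := star p q r hp hq hr hpq hqr hrp (n:ℤ)
  rw [show ((n:ℤ) - (q:ℤ)*r) = ((n:ℤ) - ((q*r : ℕ) : ℤ)) by push_cast; ring,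
    show ((n:ℤ) - (r:ℤ)*p) = ((n:ℤ) - ((r*p : ℕ) : ℤ)) by push_cast; ring,
    show ((n:ℤ) - (p:ℤ)*q) = ((n:ℤ) - ((p*q : ℕ) : ℤ)) by push_cast; ring,
    show ((n:ℤ) - ((q*r : ℕ):ℤ) - (r:ℤ)*p) = ((n:ℤ) - ((q*r+r*p : ℕ) : ℤ)) by push_cast; ring,
    show ((n:ℤ) - ((q*r : ℕ):ℤ) - (p:ℤ)*q) = ((n:ℤ) - ((q*r+p*q : ℕ) : ℤ)) by push_cast; ring,
    show ((n:ℤ) - ((r*p : ℕ):ℤ) - (p:ℤ)*q) = ((n:ℤ) - ((r*p+p*q : ℕ) : ℤ)) by push_cast; ring,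
    show ((n:ℤ) - ((q*r+r*p : ℕ):ℤ) - (p:ℤ)*q) = ((n:ℤ) - ((q*r+(r*p+p*q) : ℕ) : ℤ))
      by push_cast; ring]
    at S
  have i0 : (if (n:ℤ) = 0 then (1:ℤ) else 0) = (if n = 0 then 1 else 0) := by
    simp [Nat.cast_eq_zero]
  have i1 : (if (n:ℤ) = (p:ℤ)*q*r then (1:ℤ) else 0) = (if n = p*q*r then 1 else 0) := by
    rw [show ((p:ℤ)*q*r) = ((p*q*r:ℕ):ℤ) by push_cast; ring]; exact iteNat n _
  have i2 : (if (n:ℤ) = 2*((p:ℤ)*q*r) then (1:ℤ) else 0)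
      = (if n = p*q*r + p*q*r then 1 else 0) := by
    rw [show (2*((p:ℤ)*q*r)) = ((p*q*r+p*q*r:ℕ):ℤ) by push_cast; ring]; exact iteNat n _
  rw [i0, i1, i2] at S
  linear_combination S

set_option maxHeartbeats 1000000 in
lemma keyPS (p q r : ℕ) (hp : 0 < p) (hq : 0 < q) (hr : 0 < r)
    (hpq : Nat.Coprime p q) (hqr : Nat.Coprime q r) (hrp : Nat.Coprime r p)
    (Q : Polynomial ℤ) (hQ : ternaryId p q r Q) :
    (Q : PowerSeries ℤ) * (1 - PowerSeries.X) * (1 - PowerSeries.X^(p*q*r))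
      = Xc p q r * ((1 - PowerSeries.X^r) * (1 - PowerSeries.X^q)
        * (1 - PowerSeries.X^p)) := by
  have hps := congrArg Polynomial.coeToPowerSeries.ringHom hQ
  simp only [map_mul, map_sub, map_pow, map_one, Polynomial.coeToPowerSeries.ringHom_apply,
    Polynomial.coe_X] at hps
  have hne : (1 - (PowerSeries.X : PowerSeries ℤ)^(p*q*r)) ≠ 0 := by
    intro h
    have h2 := congrArg (PowerSeries.constantCoeff) h
    rw [map_sub, map_one, map_pow, PowerSeries.constantCoeff_X,
      zero_pow (by positivity : p*q*r ≠ 0), map_zero] at h2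
    norm_num at h2
  apply mul_right_cancel₀ hne
  rw [show ((Q : PowerSeries ℤ) * (1 - PowerSeries.X) * (1 - PowerSeries.X^(p*q*r)))
      * (1 - PowerSeries.X^(p*q*r))
      = (Q : PowerSeries ℤ) * (1 - PowerSeries.X) * ((1 - PowerSeries.X^(p*q*r))^2)
      from by ring, ← Kid p q r hp hq hr hpq hqr hrp,
    show (Q : PowerSeries ℤ) * (1 - PowerSeries.X) * (Xc p q r
        * ((1 - PowerSeries.X ^ (q*r)) * (1 - PowerSeries.X ^ (r*p))
          * (1 - PowerSeries.X ^ (p*q))))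
      = Xc p q r * ((Q : PowerSeries ℤ) * ((PowerSeries.X ^ (q*r) - 1)
          * (PowerSeries.X ^ (r*p) - 1) * (PowerSeries.X ^ (p*q) - 1)
          * (PowerSeries.X - 1))) from by ring, hps]
  ring

set_option maxHeartbeats 1000000 in
lemma Ecoeff (p q r : ℕ) (hp : 0 < p) (hq : 0 < q) (hr : 0 < r)
    (hpq : Nat.Coprime p q) (hqr : Nat.Coprime q r) (hrp : Nat.Coprime r p)
    (Q : Polynomial ℤ) (hQ : ternaryId p q r Q) (n : ℕ) :
    aCoeff Q n - aCoeff Q ((n:ℤ)-1) - aCoeff Q ((n:ℤ) - (p:ℤ)*((q:ℤ)*r))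
        + aCoeff Q ((n:ℤ) - (p:ℤ)*((q:ℤ)*r) - 1)
      = chi p q r n - chi p q r ((n:ℤ)-p) - chi p q r ((n:ℤ)-q) - chi p q r ((n:ℤ)-r)
        + chi p q r ((n:ℤ)-p-q) + chi p q r ((n:ℤ)-p-r) + chi p q r ((n:ℤ)-q-r)
        - chi p q r ((n:ℤ)-p-q-r) := by
  have hk := keyPS p q r hp hq hr hpq hqr hrp Q hQ
  have eL : (Q : PowerSeries ℤ) * (1 - PowerSeries.X) * (1 - PowerSeries.X^(p*q*r))
      = (Q : PowerSeries ℤ) - (Q : PowerSeries ℤ)*PowerSeries.X^1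
        - (Q : PowerSeries ℤ)*PowerSeries.X^(p*q*r)
        + (Q : PowerSeries ℤ)*PowerSeries.X^(p*q*r+1) := by
    simp only [pow_add, pow_one]; ring
  have eR : Xc p q r * ((1 - PowerSeries.X^r) * (1 - PowerSeries.X^q)
        * (1 - PowerSeries.X^p))
      = Xc p q r - Xc p q r*PowerSeries.X^p - Xc p q r*PowerSeries.X^q
        - Xc p q r*PowerSeries.X^r + Xc p q r*PowerSeries.X^(p+q)
        + Xc p q r*PowerSeries.X^(p+r) + Xc p q r*PowerSeries.X^(q+r)
        - Xc p q r*PowerSeries.X^(p+(q+r)) := by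
    simp only [pow_add]; ring
  rw [eL, eR] at hk
  have hc := congrArg (PowerSeries.coeff n) hk
  simp only [map_sub, map_add] at hc
  rw [coeff_poly, coeff_shift_poly, coeff_shift_poly, coeff_shift_poly,
    coeff_Xc, coeff_shift_Xc, coeff_shift_Xc, coeff_shift_Xc, coeff_shift_Xc,
    coeff_shift_Xc, coeff_shift_Xc, coeff_shift_Xc] at hc
  rw [show ((n:ℤ) - ((1:ℕ):ℤ)) = ((n:ℤ) - 1) by push_cast; ring,
    show ((n:ℤ) - ((p*q*r : ℕ):ℤ)) = ((n:ℤ) - (p:ℤ)*((q:ℤ)*r)) by push_cast; ring,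
    show ((n:ℤ) - ((p*q*r+1 : ℕ):ℤ)) = ((n:ℤ) - (p:ℤ)*((q:ℤ)*r) - 1) by push_cast; ring,
    show ((n:ℤ) - ((p:ℕ):ℤ)) = ((n:ℤ) - (p:ℤ)) by push_cast; ring,
    show ((n:ℤ) - ((q:ℕ):ℤ)) = ((n:ℤ) - (q:ℤ)) by push_cast; ring,
    show ((n:ℤ) - ((r:ℕ):ℤ)) = ((n:ℤ) - (r:ℤ)) by push_cast; ring,
    show ((n:ℤ) - ((p+q : ℕ):ℤ)) = ((n:ℤ) - (p:ℤ) - q) by push_cast; ring,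
    show ((n:ℤ) - ((p+r : ℕ):ℤ)) = ((n:ℤ) - (p:ℤ) - r) by push_cast; ring,
    show ((n:ℤ) - ((q+r : ℕ):ℤ)) = ((n:ℤ) - (q:ℤ) - r) by push_cast; ring,
    show ((n:ℤ) - ((p+(q+r) : ℕ):ℤ)) = ((n:ℤ) - (p:ℤ) - q - r) by push_cast; ring] at hc
  linear_combination hc

noncomputable def Ssum (p q r : ℕ) (t : ℤ) : ℤ := ∑ n ∈ Finset.Icc (0:ℤ) t, chi p q r n

lemma Ssum_neg (p q r : ℕ) {t : ℤ} (h : t < 0) : Ssum p q r t = 0 := by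
  rw [Ssum, Finset.Icc_eq_empty (by omega), Finset.sum_empty]

lemma Ssum_rec (p q r : ℕ) (t : ℤ) : Ssum p q r t = Ssum p q r (t-1) + chi p q r t := by
  rcases lt_or_ge t 0 with h | h
  · rw [Ssum_neg p q r h, Ssum_neg p q r (by omega), chi_neg h]; ring
  · have hins : Finset.Icc (0:ℤ) t = insert t (Finset.Icc 0 (t-1)) := by
      ext x; simp only [Finset.mem_Icc, Finset.mem_insert]; omega
    rw [Ssum, Ssum, hins, Finset.sum_insert (by simp only [Finset.mem_Icc]; omega)]
    ring

lemma Dw_eq (p q r : ℕ) (t : ℤ) :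
    Ssum p q r t - Ssum p q r (t - (p:ℤ)) = ∑ n ∈ Finset.Ioc (t - (p:ℤ)) t, chi p q r n := by
  rcases lt_or_ge t 0 with h | h
  · rw [Ssum_neg p q r h, Ssum_neg p q r (by omega)]
    rw [Finset.sum_eq_zero]
    · ring
    · intro n hn
      simp only [Finset.mem_Ioc] at hn
      exact chi_neg (by omega)
  · rcases lt_or_ge (t - (p:ℤ)) 0 with h2 | h2
    · rw [Ssum_neg p q r h2, Ssum]
      have := Finset.sum_subset (s₁ := Finset.Icc (0:ℤ) t)
        (s₂ := Finset.Ioc (t - (p:ℤ)) t)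
        (by intro x hx; simp only [Finset.mem_Icc] at hx; simp only [Finset.mem_Ioc]; omega)
        (f := fun n => chi p q r n)
        (by intro x hx hx2; simp only [Finset.mem_Ioc] at hx;
            simp only [Finset.mem_Icc] at hx2; exact chi_neg (by omega))
      rw [← this]; ring
    · have hun : Finset.Icc (0:ℤ) (t - (p:ℤ)) ∪ Finset.Ioc (t - (p:ℤ)) t
          = Finset.Icc (0:ℤ) t := by
        ext x; simp only [Finset.mem_union, Finset.mem_Icc, Finset.mem_Ioc]; omega
      have hdisj : Disjoint (Finset.Icc (0:ℤ) (t - (p:ℤ))) (Finset.Ioc (t - (p:ℤ)) t) := by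
        rw [Finset.disjoint_left]
        intro x hx hx2
        simp only [Finset.mem_Icc] at hx
        simp only [Finset.mem_Ioc] at hx2
        omega
      have := Finset.sum_union hdisj (f := fun n => chi p q r n)
      rw [hun] at this
      rw [Ssum, Ssum, this]
      ring

noncomputable def iIdx (p q r : ℕ) (n : ℤ) : ℕ :=
  if h : ∃ i : ℕ, i < p ∧ ∃ j k s : ℕ, j < q ∧ k < r ∧ Red p q r i j k s n then h.choose else 0

lemma iIdx_spec (p q r : ℕ) (hp : 0 < p) (hq : 0 < q) (hr : 0 < r) {n : ℤ}
    (hn : Rrep p q r n) :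
    iIdx p q r n < p ∧ ∃ j k s : ℕ, j < q ∧ k < r ∧ Red p q r (iIdx p q r n) j k s n := by
  have h : ∃ i : ℕ, i < p ∧ ∃ j k s : ℕ, j < q ∧ k < r ∧ Red p q r i j k s n := by
    obtain ⟨i, j, k, s, hi, hj, hk, hred⟩ := red_exists hp hq hr hn
    exact ⟨i, hi, j, k, s, hj, hk, hred⟩
  rw [iIdx, dif_pos h]
  exact h.choose_spec

lemma window_nonneg (p q r : ℕ) (t : ℤ) :
    0 ≤ ∑ n ∈ Finset.Ioc (t - (p:ℤ)) t, chi p q r n :=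
  Finset.sum_nonneg fun n _ => chi_nonneg p q r n

lemma window_neg (p q r : ℕ) {t : ℤ} (h : t < 0) :
    ∑ n ∈ Finset.Ioc (t - (p:ℤ)) t, chi p q r n = 0 := by
  apply Finset.sum_eq_zero
  intro n hn
  simp only [Finset.mem_Ioc] at hn
  exact chi_neg (by omega)

lemma window_le (p q r : ℕ) (hp : 0 < p) (hq : 0 < q) (hr : 0 < r)
    (hpq : Nat.Coprime p q) (hqr : Nat.Coprime q r) (hrp : Nat.Coprime r p)
    (t : ℤ) (ht : 0 ≤ t) :
    ∑ n ∈ Finset.Ioc (t - (p:ℤ)) t, chi p q r n ≤ t / ((q:ℤ)*r) + 1 := by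
  have hqr0 : (0:ℤ) < (q:ℤ)*r := by positivity
  rw [Finset.sum_congr rfl (fun n _ => chi_eq p q r n), Finset.sum_boole]
  have hcard : (Finset.filter (fun n => Rrep p q r n) (Finset.Ioc (t - (p:ℤ)) t)).card
      ≤ (Finset.Icc (0:ℤ) (t / ((q:ℤ)*r))).card := by
    apply Finset.card_le_card_of_injOn (fun n => (iIdx p q r n : ℤ))
    · intro n hn
      simp only [Finset.mem_coe, Finset.mem_filter, Finset.mem_Ioc] at hn
      obtain ⟨⟨hn1, hn2⟩, hR⟩ := hn
      obtain ⟨hlt, j, k, s, hj, hk, hred⟩ := iIdx_spec p q r hp hq hr hR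
      unfold Red at hred
      simp only [Finset.mem_coe, Finset.mem_Icc]
      constructor
      · positivity
      · rw [Int.le_ediv_iff_mul_le hqr0]
        have n1 : (0:ℤ) ≤ (j:ℤ)*((r:ℤ)*p) := by positivity
        have n2 : (0:ℤ) ≤ (k:ℤ)*((p:ℤ)*q) := by positivity
        have n3 : (0:ℤ) ≤ (s:ℤ)*((p:ℤ)*q*r) := by positivity
        linarith
    · intro n1 hn1 n2 hn2 heq
      simp only [Finset.mem_coe, Finset.mem_filter, Finset.mem_Ioc] at hn1 hn2
      obtain ⟨⟨ha1, ha2⟩, hR1⟩ := hn1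
      obtain ⟨⟨hb1, hb2⟩, hR2⟩ := hn2
      obtain ⟨hlt1, j1, k1, s1, hj1, hk1, hred1⟩ := iIdx_spec p q r hp hq hr hR1
      obtain ⟨hlt2, j2, k2, s2, hj2, hk2, hred2⟩ := iIdx_spec p q r hp hq hr hR2
      unfold Red at hred1 hred2
      simp only at heq
      have hd : (p:ℤ) ∣ n1 - n2 :=
        ⟨(j1:ℤ)*r + (k1:ℤ)*q + (s1:ℤ)*((q:ℤ)*r)
          - (j2:ℤ)*r - (k2:ℤ)*q - (s2:ℤ)*((q:ℤ)*r),
         by linear_combination hred1 - hred2 + ((q:ℤ)*r) * heq⟩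
      have := Int.eq_zero_of_abs_lt_dvd hd (by rw [abs_lt]; constructor <;> omega)
      omega
  calc ((Finset.filter (fun n => Rrep p q r n) (Finset.Ioc (t - (p:ℤ)) t)).card : ℤ)
      ≤ ((Finset.Icc (0:ℤ) (t / ((q:ℤ)*r))).card : ℤ) := by exact_mod_cast hcard
    _ = t / ((q:ℤ)*r) + 1 := by
        rw [Int.card_Icc]
        have h0 : (0:ℤ) ≤ t / ((q:ℤ)*r) := Int.ediv_nonneg ht (by positivity)
        omega

lemma aCoeff_neg (Q : Polynomial ℤ) {m : ℤ} (h : m < 0) : aCoeff Q m = 0 :=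
  if_neg (by omega)

lemma EcoeffZ (p q r : ℕ) (hp : 0 < p) (hq : 0 < q) (hr : 0 < r)
    (hpq : Nat.Coprime p q) (hqr : Nat.Coprime q r) (hrp : Nat.Coprime r p)
    (Q : Polynomial ℤ) (hQ : ternaryId p q r Q) (m : ℤ) (hm : 0 ≤ m) :
    aCoeff Q m - aCoeff Q (m-1) - aCoeff Q (m - (p:ℤ)*((q:ℤ)*r))
        + aCoeff Q (m - (p:ℤ)*((q:ℤ)*r) - 1)
      = chi p q r m - chi p q r (m-(p:ℤ)) - chi p q r (m-(q:ℤ)) - chi p q r (m-(r:ℤ))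
        + chi p q r (m-(p:ℤ)-(q:ℤ)) + chi p q r (m-(p:ℤ)-(r:ℤ)) + chi p q r (m-(q:ℤ)-(r:ℤ))
        - chi p q r (m-(p:ℤ)-(q:ℤ)-(r:ℤ)) := by
  have := Ecoeff p q r hp hq hr hpq hqr hrp Q hQ m.toNat
  rwa [show ((m.toNat : ℕ) : ℤ) = m by omega] at this

noncomputable def TSum (p q r : ℕ) (m : ℤ) : ℤ :=
  Ssum p q r m - Ssum p q r (m-(p:ℤ)) - Ssum p q r (m-(q:ℤ)) - Ssum p q r (m-(r:ℤ))
    + Ssum p q r (m-(p:ℤ)-(q:ℤ)) + Ssum p q r (m-(p:ℤ)-(r:ℤ)) + Ssum p q r (m-(q:ℤ)-(r:ℤ))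
    - Ssum p q r (m-(p:ℤ)-(q:ℤ)-(r:ℤ))

set_option maxHeartbeats 1000000 in
lemma main_formula (p q r : ℕ) (hp : 0 < p) (hq : 0 < q) (hr : 0 < r)
    (hpq : Nat.Coprime p q) (hqr : Nat.Coprime q r) (hrp : Nat.Coprime r p)
    (Q : Polynomial ℤ) (hQ : ternaryId p q r Q) :
    ∀ m : ℤ, 0 ≤ m →
      aCoeff Q m - aCoeff Q (m - (p:ℤ)*((q:ℤ)*r)) = TSum p q r m := by
  suffices H : ∀ N : ℕ, aCoeff Q (N:ℤ) - aCoeff Q ((N:ℤ) - (p:ℤ)*((q:ℤ)*r)) = TSum p q r (N:ℤ) by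
    intro m hm
    have := H m.toNat
    rwa [show ((m.toNat:ℕ):ℤ) = m by omega] at this
  intro N
  induction N with
  | zero =>
    rw [Nat.cast_zero]
    have E0 := EcoeffZ p q r hp hq hr hpq hqr hrp Q hQ 0 le_rfl
    have hpqrpos : (0:ℤ) < (p:ℤ)*((q:ℤ)*r) := by positivity
    have hppos : (0:ℤ) < (p:ℤ) := by exact_mod_cast hp
    have hqpos : (0:ℤ) < (q:ℤ) := by exact_mod_cast hq
    have hrpos : (0:ℤ) < (r:ℤ) := by exact_mod_cast hr
    have hz1 : aCoeff Q ((0:ℤ)-1) = 0 := aCoeff_neg Q (by norm_num)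
    have hz2 : aCoeff Q ((0:ℤ) - (p:ℤ)*((q:ℤ)*r) - 1) = 0 := aCoeff_neg Q (by linarith)
    have hc : ∀ u : ℤ, u < 0 → Ssum p q r u = chi p q r u := fun u hu => by
      rw [Ssum_neg p q r hu, chi_neg hu]
    have hS0 : Ssum p q r 0 = chi p q r 0 := by
      rw [Ssum_rec p q r 0, Ssum_neg p q r (by norm_num)]; ring
    have e1 := hc ((0:ℤ)-(p:ℤ)) (by linarith)
    have e2 := hc ((0:ℤ)-(q:ℤ)) (by linarith)
    have e3 := hc ((0:ℤ)-(r:ℤ)) (by linarith)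
    have e4 := hc ((0:ℤ)-(p:ℤ)-(q:ℤ)) (by linarith)
    have e5 := hc ((0:ℤ)-(p:ℤ)-(r:ℤ)) (by linarith)
    have e6 := hc ((0:ℤ)-(q:ℤ)-(r:ℤ)) (by linarith)
    have e7 := hc ((0:ℤ)-(p:ℤ)-(q:ℤ)-(r:ℤ)) (by linarith)
    unfold TSum
    linarith [E0, hz1, hz2, hS0, e1, e2, e3, e4, e5, e6, e7]
  | succ N ih =>
    rw [show ((N+1 : ℕ):ℤ) = (N:ℤ)+1 by push_cast; ring]
    set n : ℤ := (N:ℤ) with hnn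
    have E1 := EcoeffZ p q r hp hq hr hpq hqr hrp Q hQ (n+1) (by positivity)
    rw [show n+1-1 = n from by ring,
      show n+1-(p:ℤ)*((q:ℤ)*r)-1 = n - (p:ℤ)*((q:ℤ)*r) from by ring] at E1
    have A0 : Ssum p q r (n+1) = Ssum p q r n + chi p q r (n+1) := by
      have := Ssum_rec p q r (n+1); rwa [show n+1-1 = n from by ring] at this
    have A1 : Ssum p q r (n+1-(p:ℤ)) = Ssum p q r (n-(p:ℤ)) + chi p q r (n+1-(p:ℤ)) := by
      have := Ssum_rec p q r (n+1-(p:ℤ))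
      rwa [show n+1-(p:ℤ)-1 = n-(p:ℤ) from by ring] at this
    have A2 : Ssum p q r (n+1-(q:ℤ)) = Ssum p q r (n-(q:ℤ)) + chi p q r (n+1-(q:ℤ)) := by
      have := Ssum_rec p q r (n+1-(q:ℤ))
      rwa [show n+1-(q:ℤ)-1 = n-(q:ℤ) from by ring] at this
    have A3 : Ssum p q r (n+1-(r:ℤ)) = Ssum p q r (n-(r:ℤ)) + chi p q r (n+1-(r:ℤ)) := by
      have := Ssum_rec p q r (n+1-(r:ℤ))
      rwa [show n+1-(r:ℤ)-1 = n-(r:ℤ) from by ring] at this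
    have A4 : Ssum p q r (n+1-(p:ℤ)-(q:ℤ))
        = Ssum p q r (n-(p:ℤ)-(q:ℤ)) + chi p q r (n+1-(p:ℤ)-(q:ℤ)) := by
      have := Ssum_rec p q r (n+1-(p:ℤ)-(q:ℤ))
      rwa [show n+1-(p:ℤ)-(q:ℤ)-1 = n-(p:ℤ)-(q:ℤ) from by ring] at this
    have A5 : Ssum p q r (n+1-(p:ℤ)-(r:ℤ))
        = Ssum p q r (n-(p:ℤ)-(r:ℤ)) + chi p q r (n+1-(p:ℤ)-(r:ℤ)) := by
      have := Ssum_rec p q r (n+1-(p:ℤ)-(r:ℤ))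
      rwa [show n+1-(p:ℤ)-(r:ℤ)-1 = n-(p:ℤ)-(r:ℤ) from by ring] at this
    have A6 : Ssum p q r (n+1-(q:ℤ)-(r:ℤ))
        = Ssum p q r (n-(q:ℤ)-(r:ℤ)) + chi p q r (n+1-(q:ℤ)-(r:ℤ)) := by
      have := Ssum_rec p q r (n+1-(q:ℤ)-(r:ℤ))
      rwa [show n+1-(q:ℤ)-(r:ℤ)-1 = n-(q:ℤ)-(r:ℤ) from by ring] at this
    have A7 : Ssum p q r (n+1-(p:ℤ)-(q:ℤ)-(r:ℤ))
        = Ssum p q r (n-(p:ℤ)-(q:ℤ)-(r:ℤ)) + chi p q r (n+1-(p:ℤ)-(q:ℤ)-(r:ℤ)) := by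
      have := Ssum_rec p q r (n+1-(p:ℤ)-(q:ℤ)-(r:ℤ))
      rwa [show n+1-(p:ℤ)-(q:ℤ)-(r:ℤ)-1 = n-(p:ℤ)-(q:ℤ)-(r:ℤ) from by ring] at this
    unfold TSum at ih ⊢
    linarith [E1, A0, A1, A2, A3, A4, A5, A6, A7, ih]

lemma deg_eq (p q r : ℕ) (hp : 0 < p) (hq : 0 < q) (hr : 0 < r)
    (Q : Polynomial ℤ) (hQ : ternaryId p q r Q) :
    Q ≠ 0 ∧ Q.natDegree + (q*r + r*p + p*q + 1) = p*q*r + r + q + p := by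
  have hX : ∀ k : ℕ, 0 < k → ((X:Polynomial ℤ)^k - 1) ≠ 0 := by
    intro k hk
    have := Polynomial.X_pow_sub_C_ne_zero hk (1:ℤ)
    rwa [Polynomial.C_1] at this
  have hdX : ∀ k : ℕ, ((X:Polynomial ℤ)^k - 1).natDegree = k := by
    intro k
    rw [← Polynomial.C_1, Polynomial.natDegree_X_pow_sub_C]
  have hX1 : ((X:Polynomial ℤ) - 1) ≠ 0 := by
    have := hX 1 one_pos; rwa [pow_one] at this
  have h1 : ((X:Polynomial ℤ)^(q*r) - 1) ≠ 0 := hX _ (by positivity)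
  have h2 : ((X:Polynomial ℤ)^(r*p) - 1) ≠ 0 := hX _ (by positivity)
  have h3 : ((X:Polynomial ℤ)^(p*q) - 1) ≠ 0 := hX _ (by positivity)
  have g1 : ((X:Polynomial ℤ)^(p*q*r) - 1) ≠ 0 := hX _ (by positivity)
  have g2 : ((X:Polynomial ℤ)^r - 1) ≠ 0 := hX _ hr
  have g3 : ((X:Polynomial ℤ)^q - 1) ≠ 0 := hX _ hq
  have g4 : ((X:Polynomial ℤ)^p - 1) ≠ 0 := hX _ hp
  have hRne : ((X:Polynomial ℤ)^(p*q*r) - 1) * ((X:Polynomial ℤ)^r - 1) *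
      ((X:Polynomial ℤ)^q - 1) * ((X:Polynomial ℤ)^p - 1) ≠ 0 :=
    mul_ne_zero (mul_ne_zero (mul_ne_zero g1 g2) g3) g4
  have hQne : Q ≠ 0 := by
    intro h
    unfold ternaryId at hQ
    rw [h, zero_mul] at hQ
    exact hRne hQ.symm
  refine ⟨hQne, ?_⟩
  unfold ternaryId at hQ
  have hdg := congrArg Polynomial.natDegree hQ
  rw [Polynomial.natDegree_mul hQne
      (mul_ne_zero (mul_ne_zero (mul_ne_zero h1 h2) h3) hX1),
    Polynomial.natDegree_mul (mul_ne_zero (mul_ne_zero h1 h2) h3) hX1,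
    Polynomial.natDegree_mul (mul_ne_zero h1 h2) h3,
    Polynomial.natDegree_mul h1 h2,
    Polynomial.natDegree_mul (mul_ne_zero (mul_ne_zero g1 g2) g3) g4,
    Polynomial.natDegree_mul (mul_ne_zero g1 g2) g3,
    Polynomial.natDegree_mul g1 g2,
    hdX, hdX, hdX, hdX, hdX, hdX, hdX] at hdg
  have hd1 : ((X:Polynomial ℤ) - 1).natDegree = 1 := by
    have := Polynomial.natDegree_X_sub_C (1:ℤ)
    rwa [Polynomial.C_1] at this
  rw [hd1] at hdg
  omega


set_option maxHeartbeats 1000000 in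
/-- If `p < min(q, r)`, then `|a_m| ≤ 2⌈m/(qr)⌉ + 1` for every `m ≥ 0`. -/
theorem stmt_16 (p q r : ℕ) (hp : 3 ≤ p) (hq : 3 ≤ q) (hr : 3 ≤ r)
    (hpq : Nat.Coprime p q) (hqr : Nat.Coprime q r) (hrp : Nat.Coprime r p)
    (hpmin : p < min q r)
    (Q : Polynomial ℤ) (hQ : ternaryId p q r Q) :
    ∀ m : ℤ, 0 ≤ m → |aCoeff Q m| ≤ 2 * ⌈(m : ℚ) / ((q : ℚ) * r)⌉ + 1 := by
  intro m hm
  have hp0 : 0 < p := by omega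
  have hq0 : 0 < q := by omega
  have hr0 : 0 < r := by omega
  have hd0 : (0:ℤ) < (q:ℤ)*r := by positivity
  have hmQ : (0:ℚ) ≤ (m:ℚ) := by exact_mod_cast hm
  have hc0 : 0 ≤ ⌈(m : ℚ) / ((q : ℚ) * r)⌉ := Int.ceil_nonneg (div_nonneg hmQ (by positivity))
  have hfl : ⌊(m:ℚ) / ((q:ℚ)*r)⌋ = m / ((q:ℤ)*r) := by
    rw [show ((q:ℚ)*r) = ((q*r : ℕ):ℚ) by push_cast; ring, Rat.floor_intCast_div_natCast,
      show ((q*r:ℕ):ℤ) = (q:ℤ)*r by push_cast; ring]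
  have hcu : ⌈(m : ℚ) / ((q : ℚ) * r)⌉ ≤ m / ((q:ℤ)*r) + 1 := by
    rw [← hfl]; exact Int.ceil_le_floor_add_one _
  have hcl : m / ((q:ℤ)*r) ≤ ⌈(m : ℚ) / ((q : ℚ) * r)⌉ := by
    rw [← hfl]; exact Int.floor_le_ceil _
  obtain ⟨hQne, hdeg⟩ := deg_eq p q r hp0 hq0 hr0 Q hQ
  rcases le_or_gt ((p*q*r : ℕ) : ℤ) m with hge | hlt
  · have hz : aCoeff Q m = 0 := by
      unfold aCoeff
      rw [if_pos hm]
      apply Polynomial.coeff_eq_zero_of_natDegree_lt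
      have f1 : q ≤ q*r := Nat.le_mul_of_pos_right q hr0
      have f2 : r ≤ r*p := Nat.le_mul_of_pos_right r hp0
      have f3 : p ≤ p*q := Nat.le_mul_of_pos_right p hq0
      omega
    rw [hz, abs_zero]
    linarith
  · have hform := main_formula p q r hp0 hq0 hr0 hpq hqr hrp Q hQ m hm
    have hzz : aCoeff Q (m - (p:ℤ)*((q:ℤ)*r)) = 0 := by
      apply aCoeff_neg
      have h2 : m < (p:ℤ)*((q:ℤ)*r) := by push_cast at hlt; linarith
      linarith
    rw [hzz, sub_zero] at hform
    have D0 := Dw_eq p q r m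
    have D1 := Dw_eq p q r (m - (q:ℤ))
    rw [show m - (q:ℤ) - (p:ℤ) = m - (p:ℤ) - (q:ℤ) from by ring] at D1
    have D2 := Dw_eq p q r (m - (r:ℤ))
    rw [show m - (r:ℤ) - (p:ℤ) = m - (p:ℤ) - (r:ℤ) from by ring] at D2
    have D3 := Dw_eq p q r (m - (q:ℤ) - (r:ℤ))
    rw [show m - (q:ℤ) - (r:ℤ) - (p:ℤ) = m - (p:ℤ) - (q:ℤ) - (r:ℤ) from by ring] at D3
    unfold TSum at hform
    have hA : aCoeff Q m
        = (∑ n ∈ Finset.Ioc (m - (p:ℤ)) m, chi p q r n)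
          - (∑ n ∈ Finset.Ioc (m - (p:ℤ) - (q:ℤ)) (m - (q:ℤ)), chi p q r n)
          - (∑ n ∈ Finset.Ioc (m - (p:ℤ) - (r:ℤ)) (m - (r:ℤ)), chi p q r n)
          + (∑ n ∈ Finset.Ioc (m - (p:ℤ) - (q:ℤ) - (r:ℤ)) (m - (q:ℤ) - (r:ℤ)), chi p q r n)
        := by linarith [hform, D0, D1, D2, D3]
    have N0 := window_nonneg p q r m
    have N1 := window_nonneg p q r (m - (q:ℤ))
    rw [show m - (q:ℤ) - (p:ℤ) = m - (p:ℤ) - (q:ℤ) from by ring] at N1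
    have N2 := window_nonneg p q r (m - (r:ℤ))
    rw [show m - (r:ℤ) - (p:ℤ) = m - (p:ℤ) - (r:ℤ) from by ring] at N2
    have N3 := window_nonneg p q r (m - (q:ℤ) - (r:ℤ))
    rw [show m - (q:ℤ) - (r:ℤ) - (p:ℤ) = m - (p:ℤ) - (q:ℤ) - (r:ℤ) from by ring] at N3
    by_cases hdvd : ((q:ℤ)*r) ∣ m
    · -- divisible case
      obtain ⟨e, he⟩ := hdvd
      have hde : m / ((q:ℤ)*r) = e := by
        rw [he]; exact Int.mul_ediv_cancel_left e (ne_of_gt hd0)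
      have hcd : ⌈(m : ℚ) / ((q : ℚ) * r)⌉ = e := by
        have hne : ((q:ℚ)*r) ≠ 0 := by positivity
        have h2 : (m:ℚ)/((q:ℚ)*r) = (e:ℚ) := by
          rw [show ((m:ℤ):ℚ) = ((q:ℚ)*r) * (e:ℚ) by rw [he]; push_cast; ring,
            mul_comm ((q:ℚ)*r) ((e:ℚ)), mul_div_assoc, div_self hne, mul_one]
        rw [h2, Int.ceil_intCast]
      have B0 : (∑ n ∈ Finset.Ioc (m - (p:ℤ)) m, chi p q r n)
          ≤ ⌈(m : ℚ) / ((q : ℚ) * r)⌉ + 1 := by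
        have := window_le p q r hp0 hq0 hr0 hpq hqr hrp m hm
        linarith
      have hshift : ∀ t : ℤ, t ≤ m - 1 →
          (∑ n ∈ Finset.Ioc (t - (p:ℤ)) t, chi p q r n) ≤ ⌈(m : ℚ) / ((q : ℚ) * r)⌉ := by
        intro t ht
        rcases lt_or_ge t 0 with h|h
        · rw [window_neg p q r h]; exact hc0
        · have hw := window_le p q r hp0 hq0 hr0 hpq hqr hrp t h
          have hm1 : (m - 1) / ((q:ℤ)*r) = e - 1 := by
            rw [he, show (q:ℤ)*r*e - 1 = ((q:ℤ)*r - 1) + (e-1)*((q:ℤ)*r) from by ring,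
              Int.add_mul_ediv_right _ _ (ne_of_gt hd0),
              Int.ediv_eq_zero_of_lt (by linarith) (by linarith), zero_add]
          have hmono : t / ((q:ℤ)*r) ≤ (m-1) / ((q:ℤ)*r) := Int.ediv_le_ediv hd0 ht
          rw [hm1] at hmono
          rw [hcd]
          linarith
      have B1 := hshift (m - (q:ℤ)) (by omega)
      rw [show m - (q:ℤ) - (p:ℤ) = m - (p:ℤ) - (q:ℤ) from by ring] at B1
      have B2 := hshift (m - (r:ℤ)) (by omega)
      rw [show m - (r:ℤ) - (p:ℤ) = m - (p:ℤ) - (r:ℤ) from by ring] at B2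
      have B3 := hshift (m - (q:ℤ) - (r:ℤ)) (by omega)
      rw [show m - (q:ℤ) - (r:ℤ) - (p:ℤ) = m - (p:ℤ) - (q:ℤ) - (r:ℤ) from by ring] at B3
      rw [hA, abs_le]
      constructor <;> linarith
    · -- non-divisible case
      have hmodpos : 1 ≤ m % ((q:ℤ)*r) := by
        have h1 := Int.emod_nonneg m (ne_of_gt hd0)
        have h2 : m % ((q:ℤ)*r) ≠ 0 := fun h => hdvd (Int.dvd_of_emod_eq_zero h)
        omega
      have heq := Int.mul_ediv_add_emod m ((q:ℤ)*r)
      have hstrict : m / ((q:ℤ)*r) + 1 ≤ ⌈(m : ℚ) / ((q : ℚ) * r)⌉ := by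
        have h3 : (m / ((q:ℤ)*r)) * ((q:ℤ)*r) < m := by linarith
        have hltQ : ((m / ((q:ℤ)*r) : ℤ):ℚ) < (m:ℚ)/((q:ℚ)*r) := by
          rw [lt_div_iff₀ (by positivity : (0:ℚ) < (q:ℚ)*r)]
          exact_mod_cast h3
        have h4 : ((m / ((q:ℤ)*r) : ℤ):ℚ) < (⌈(m : ℚ) / ((q : ℚ) * r)⌉ : ℚ) :=
          lt_of_lt_of_le hltQ (Int.le_ceil _)
        have h5 : m / ((q:ℤ)*r) < ⌈(m : ℚ) / ((q : ℚ) * r)⌉ := by exact_mod_cast h4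
        omega
      have hshift : ∀ t : ℤ, t ≤ m →
          (∑ n ∈ Finset.Ioc (t - (p:ℤ)) t, chi p q r n) ≤ ⌈(m : ℚ) / ((q : ℚ) * r)⌉ := by
        intro t ht
        rcases lt_or_ge t 0 with h|h
        · rw [window_neg p q r h]; exact hc0
        · have hw := window_le p q r hp0 hq0 hr0 hpq hqr hrp t h
          have hmono : t / ((q:ℤ)*r) ≤ m / ((q:ℤ)*r) := Int.ediv_le_ediv hd0 ht
          linarith
      have B0 := hshift m le_rfl
      have B1 := hshift (m - (q:ℤ)) (by omega)
      rw [show m - (q:ℤ) - (p:ℤ) = m - (p:ℤ) - (q:ℤ) from by ring] at B1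
      have B2 := hshift (m - (r:ℤ)) (by omega)
      rw [show m - (r:ℤ) - (p:ℤ) = m - (p:ℤ) - (r:ℤ) from by ring] at B2
      have B3 := hshift (m - (q:ℤ) - (r:ℤ)) (by omega)
      rw [show m - (q:ℤ) - (r:ℤ) - (p:ℤ) = m - (p:ℤ) - (q:ℤ) - (r:ℤ) from by ring] at B3
      rw [hA, abs_le]
      constructor <;> linarith
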